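/- Under the invertibility assumption of each I − 𝐂_k T_{k+1} (with T as in the Riccati-type recursion T_N = 𝐆, T_k = 𝐋_k T_{k+1}(I − 𝐂_k T_{k+1})⁻¹𝐀_k + 𝐇_k), the solution of the forward-backward difference equation X_{k+1} = 𝐀_k X_k + 𝐂_k Z_{k+1}, Z_k = 𝐇_k X_k + 𝐋_k Z_{k+1}, X_t = x, Z_N = 𝐆X_N is unique, and every solution satisfies Z_k = T_k X_k for all k. -/
import Mathlib


open Matrix

private lemma FBDE_inv_mulVec {m : ℕ} (M : Matrix (Fin m) (Fin m) ℝ) (hM : IsUnit M)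
    (v w : Fin m → ℝ) (h : M *ᵥ v = w) : v = M⁻¹ *ᵥ w := by
  have h1 : M⁻¹ * M = 1 := M.nonsing_inv_mul ((Matrix.isUnit_iff_isUnit_det M).mp hM)
  rw [← h, Matrix.mulVec_mulVec, h1, Matrix.one_mulVec]

private lemma FBDE_stepX {n p : ℕ} (A : Matrix (Fin n) (Fin n) ℝ)
    (C : Matrix (Fin n) (Fin p) ℝ) (T1 : Matrix (Fin p) (Fin n) ℝ)
    (hM : IsUnit (1 - C * T1)) (Xk Xk1 : Fin n → ℝ) (Zk1 : Fin p → ℝ)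
    (h1 : Xk1 = A *ᵥ Xk + C *ᵥ Zk1) (h2 : Zk1 = T1 *ᵥ Xk1) :
    Xk1 = (1 - C * T1)⁻¹ *ᵥ (A *ᵥ Xk) := by
  apply FBDE_inv_mulVec _ hM
  rw [Matrix.sub_mulVec, Matrix.one_mulVec, ← Matrix.mulVec_mulVec, ← h2]
  rw [h1]; abel

/-- Under invertibility of each `I − C_kT_{k+1}`, the solution of the
forward-backward difference equation is unique and satisfies `Z_k = T_kX_k`. -/
theorem FBDE_unique_solution {n p t N : ℕ}
    (AA : ℕ → Matrix (Fin n) (Fin n) ℝ) (CC : ℕ → Matrix (Fin n) (Fin p) ℝ)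
    (HH : ℕ → Matrix (Fin p) (Fin n) ℝ) (LL : ℕ → Matrix (Fin p) (Fin p) ℝ)
    (GG : Matrix (Fin p) (Fin n) ℝ) (x : Fin n → ℝ)
    (T : ℕ → Matrix (Fin p) (Fin n) ℝ)
    (hTN : T N = GG)
    (hinv : ∀ k, t ≤ k → k < N → IsUnit (1 - CC k * T (k+1)))
    (hT : ∀ k, t ≤ k → k < N →
      T k = LL k * T (k+1) * (1 - CC k * T (k+1))⁻¹ * AA k + HH k)
    (X X' : ℕ → Fin n → ℝ) (Z Z' : ℕ → Fin p → ℝ)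
    (hXt : X t = x) (hZN : Z N = GG *ᵥ X N)
    (hsol : ∀ k, t ≤ k → k < N →
      X (k+1) = AA k *ᵥ X k + CC k *ᵥ Z (k+1) ∧
      Z k = HH k *ᵥ X k + LL k *ᵥ Z (k+1))
    (hXt' : X' t = x) (hZN' : Z' N = GG *ᵥ X' N)
    (hsol' : ∀ k, t ≤ k → k < N →
      X' (k+1) = AA k *ᵥ X' k + CC k *ᵥ Z' (k+1) ∧
      Z' k = HH k *ᵥ X' k + LL k *ᵥ Z' (k+1)) :
    ∀ k, t ≤ k → k ≤ N →
      Z k = T k *ᵥ X k ∧ X' k = X k ∧ Z' k = Z k := by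
  -- First: Z_k = T_k X_k for any solution, by backward induction.
  have keyZ : ∀ (Y : ℕ → Fin n → ℝ) (W : ℕ → Fin p → ℝ),
      W N = GG *ᵥ Y N →
      (∀ k, t ≤ k → k < N →
        Y (k+1) = AA k *ᵥ Y k + CC k *ᵥ W (k+1) ∧
        W k = HH k *ᵥ Y k + LL k *ᵥ W (k+1)) →
      ∀ d k, N = k + d → t ≤ k → W k = T k *ᵥ Y k := by
    intro Y W hWN hsolY d
    induction d with
    | zero => intro k hk _; subst hk; simpa [hTN] using hWN
    | succ d ih =>
      intro k hk htk
      have hkN : k < N := by omega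
      have ih1 : W (k+1) = T (k+1) *ᵥ Y (k+1) := ih (k+1) (by omega) (by omega)
      have hX1 : Y (k+1) = (1 - CC k * T (k+1))⁻¹ *ᵥ (AA k *ᵥ Y k) :=
        FBDE_stepX _ _ _ (hinv k htk hkN) _ _ _ (hsolY k htk hkN).1 ih1
      rw [(hsolY k htk hkN).2, ih1, hX1, hT k htk hkN]
      simp [Matrix.add_mulVec, Matrix.mulVec_mulVec, add_comm, Matrix.mul_assoc]
  have hZ : ∀ k, t ≤ k → k ≤ N → Z k = T k *ᵥ X k := fun k htk hkN =>
    keyZ X Z hZN hsol (N - k) k (by omega) htk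
  have hZ' : ∀ k, t ≤ k → k ≤ N → Z' k = T k *ᵥ X' k := fun k htk hkN =>
    keyZ X' Z' hZN' hsol' (N - k) k (by omega) htk
  -- Uniqueness of X by forward induction.
  have hXeq : ∀ k, t ≤ k → k ≤ N → X' k = X k := by
    intro k htk
    induction k, htk using Nat.le_induction with
    | base => intro _; rw [hXt, hXt']
    | succ k htk ih =>
      intro hk1
      have hkN : k < N := by omega
      have ihk : X' k = X k := ih (by omega)
      have e1 : X (k+1) = (1 - CC k * T (k+1))⁻¹ *ᵥ (AA k *ᵥ X k) :=
        FBDE_stepX _ _ _ (hinv k htk hkN) _ _ _ (hsol k htk hkN).1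
          (hZ (k+1) (by omega) (by omega))
      have e2 : X' (k+1) = (1 - CC k * T (k+1))⁻¹ *ᵥ (AA k *ᵥ X' k) :=
        FBDE_stepX _ _ _ (hinv k htk hkN) _ _ _ (hsol' k htk hkN).1
          (hZ' (k+1) (by omega) (by omega))
      rw [e1, e2, ihk]
  intro k htk hkN
  refine ⟨hZ k htk hkN, hXeq k htk hkN, ?_⟩
  rw [hZ k htk hkN, hZ' k htk hkN, hXeq k htk hkN]
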